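/- The path P on four vertices (the path graph a–u–v–b of length three) is not the phylogeny graph of any doubly partial order: there is no doubly partial order D such that P(D) is isomorphic to the path graph on 4 vertices. -/

import Mathlib

/-- `prec x y` means `x₁ < y₁` and `x₂ < y₂`, written `x ≺ y`. -/
def prec (x y : ℝ × ℝ) : Prop := x.1 < y.1 ∧ x.2 < y.2

/-- The phylogeny graph of the doubly partial order on a finite set
`V ⊆ ℝ²` (arcs `(x,v)` exactly when `v ≺ x`). -/
def phylogenyGraph (V : Finset (ℝ × ℝ)) : SimpleGraph {p : ℝ × ℝ // p ∈ V} where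
  Adj u v := u ≠ v ∧
    (prec u.1 v.1 ∨ prec v.1 u.1 ∨ ∃ z ∈ V, prec z u.1 ∧ prec z v.1)
  symm := by
    constructor
    intro u v h
    exact ⟨Ne.symm h.1, by tauto⟩
  loopless := by
    constructor
    intro u h
    exact h.1 rfl

lemma prec_trans {x y z : ℝ × ℝ} (h : prec x y) (h' : prec y z) : prec x z :=
  ⟨h.1.trans h'.1, h.2.trans h'.2⟩

/-- The path on four vertices is not the phylogeny graph of any doubly
partial order. -/
theorem pathGraph_four_not_phylogeny :
    ¬ ∃ V : Finset (ℝ × ℝ),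
      Nonempty (phylogenyGraph V ≃g SimpleGraph.pathGraph 4) := by
  rintro ⟨V, ⟨e⟩⟩
  set a := e.symm 0 with ha
  set u := e.symm 1 with hu
  set v := e.symm 2 with hv
  set b := e.symm 3 with hb
  have hfin : ∀ i : Fin 4, i = 0 ∨ i = 1 ∨ i = 2 ∨ i = 3 := by decide
  have h4 : ∀ x : {p : ℝ × ℝ // p ∈ V}, x = a ∨ x = u ∨ x = v ∨ x = b := by
    intro x
    rcases hfin (e x) with h | h | h | h
    · exact Or.inl (by rw [ha, ← h, e.symm_apply_apply])
    · exact Or.inr (Or.inl (by rw [hu, ← h, e.symm_apply_apply]))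
    · exact Or.inr (Or.inr (Or.inl (by rw [hv, ← h, e.symm_apply_apply])))
    · exact Or.inr (Or.inr (Or.inr (by rw [hb, ← h, e.symm_apply_apply])))
  have hA : ∀ i j : Fin 4,
      (phylogenyGraph V).Adj (e.symm i) (e.symm j) ↔ (SimpleGraph.pathGraph 4).Adj i j :=
    fun i j => e.symm.map_adj_iff
  have hne : ∀ i j : Fin 4, i ≠ j → e.symm i ≠ e.symm j := by
    intro i j hij h
    exact hij (by rw [← e.apply_symm_apply i, h, e.apply_symm_apply])
  have pg : ∀ i j : Fin 4, (SimpleGraph.pathGraph 4).Adj i j ↔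
      (i.val + 1 = j.val ∨ j.val + 1 = i.val) := fun i j => SimpleGraph.pathGraph_adj
  have e01 : (phylogenyGraph V).Adj a u := (hA 0 1).2 (by rw [pg]; decide)
  have e12 : (phylogenyGraph V).Adj u v := (hA 1 2).2 (by rw [pg]; decide)
  have e23 : (phylogenyGraph V).Adj v b := (hA 2 3).2 (by rw [pg]; decide)
  have n02 : ¬ (phylogenyGraph V).Adj a v := fun h => by
    have := (hA 0 2).1 h; rw [pg] at this; exact absurd this (by decide)
  have n03 : ¬ (phylogenyGraph V).Adj a b := fun h => by
    have := (hA 0 3).1 h; rw [pg] at this; exact absurd this (by decide)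
  have n13 : ¬ (phylogenyGraph V).Adj u b := fun h => by
    have := (hA 1 3).1 h; rw [pg] at this; exact absurd this (by decide)
  have ne02 : a ≠ v := hne 0 2 (by decide)
  have ne03 : a ≠ b := hne 0 3 (by decide)
  have ne13 : u ≠ b := hne 1 3 (by decide)
  -- each edge is a comparability
  have cau : prec a.1 u.1 ∨ prec u.1 a.1 := by
    rcases e01.2 with h | h | ⟨z, hz, h1, h2⟩
    · exact Or.inl h
    · exact Or.inr h
    · rcases h4 ⟨z, hz⟩ with h | h | h | h
      · exact Or.inl (by rw [show z = a.1 from congrArg Subtype.val h] at h2; exact h2)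
      · exact Or.inr (by rw [show z = u.1 from congrArg Subtype.val h] at h1; exact h1)
      · rw [show z = v.1 from congrArg Subtype.val h] at h1
        exact absurd ⟨ne02, Or.inr (Or.inl h1)⟩ n02
      · rw [show z = b.1 from congrArg Subtype.val h] at h1
        exact absurd ⟨ne03, Or.inr (Or.inl h1)⟩ n03
  have cuv : prec u.1 v.1 ∨ prec v.1 u.1 := by
    rcases e12.2 with h | h | ⟨z, hz, h1, h2⟩
    · exact Or.inl h
    · exact Or.inr h
    · rcases h4 ⟨z, hz⟩ with h | h | h | h
      · rw [show z = a.1 from congrArg Subtype.val h] at h2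
        exact absurd ⟨ne02, Or.inl h2⟩ n02
      · exact Or.inl (by rw [show z = u.1 from congrArg Subtype.val h] at h2; exact h2)
      · exact Or.inr (by rw [show z = v.1 from congrArg Subtype.val h] at h1; exact h1)
      · rw [show z = b.1 from congrArg Subtype.val h] at h1
        exact absurd ⟨ne13, Or.inr (Or.inl h1)⟩ n13
  have cvb : prec v.1 b.1 ∨ prec b.1 v.1 := by
    rcases e23.2 with h | h | ⟨z, hz, h1, h2⟩
    · exact Or.inl h
    · exact Or.inr h
    · rcases h4 ⟨z, hz⟩ with h | h | h | h
      · rw [show z = a.1 from congrArg Subtype.val h] at h1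
        exact absurd ⟨ne02, Or.inl h1⟩ n02
      · rw [show z = u.1 from congrArg Subtype.val h] at h2
        exact absurd ⟨ne13, Or.inl h2⟩ n13
      · exact Or.inl (by rw [show z = v.1 from congrArg Subtype.val h] at h2; exact h2)
      · exact Or.inr (by rw [show z = b.1 from congrArg Subtype.val h] at h1; exact h1)
  -- case analysis on the three orientations
  rcases cau with h1 | h1
  · rcases cuv with h2 | h2
    · -- a≺u, u≺v : a≺v gives edge av
      exact n02 ⟨ne02, Or.inl (prec_trans h1 h2)⟩
    · rcases cvb with h3 | h3
      · -- v≺u, v≺b : v is common prey of u and b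
        exact n13 ⟨ne13, Or.inr (Or.inr ⟨v.1, v.2, h2, h3⟩)⟩
      · -- b≺v≺u : edge ub
        exact n13 ⟨ne13, Or.inr (Or.inl (prec_trans h3 h2))⟩
  · rcases cuv with h2 | h2
    · -- u≺a, u≺v : u common prey of a and v
      exact n02 ⟨ne02, Or.inr (Or.inr ⟨u.1, u.2, h1, h2⟩)⟩
    · -- v≺u≺a : edge av
      exact n02 ⟨ne02, Or.inr (Or.inl (prec_trans h2 h1))⟩
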